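/- Let d ≥ 2, μ > 0, D ∈ ℝ with √(dμ) ≠ -D, let C = (e^{2√(dμ)} - e^{D+√(dμ)})/(e^{D+√(dμ)} - 1), and let u(r) = √(dμ)(e^{2√(dμ)r} - C)/(e^{2√(dμ)r} + C). For any D_i ∈ ℝ, the function L_i(r) = u(r)/d + c_i·√(dμ)·e^{√(dμ)r}/(C + e^{2√(dμ)r}), with c_i = (D_i - D/d)/∫₀¹ √(dμ)e^{√(dμ)x}/(C + e^{2√(dμ)x}) dx, satisfies L_i' = -u·L_i + μ on [0,1] and ∫₀¹ L_i(r) dr = D_i. Moreover L_i is the unique C¹ solution of this linear ODE with that integral constraint. -/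

import Mathlib

open Real Set

theorem stmt_7 (d : ℕ) (hd : 2 ≤ d) (μ D Di : ℝ) (hμ : 0 < μ)
    (hne : Real.sqrt (d * μ) ≠ -D)
    (s : ℝ) (hs : s = Real.sqrt (d * μ))
    (C : ℝ) (hC : C = (Real.exp (2 * s) - Real.exp (D + s)) / (Real.exp (D + s) - 1))
    (u : ℝ → ℝ)
    (hu : u = fun r => s * (Real.exp (2 * s * r) - C) / (Real.exp (2 * s * r) + C))
    (ci : ℝ)
    (hci : ci = (Di - D / d) /
      ∫ x in (0:ℝ)..1, s * Real.exp (s * x) / (C + Real.exp (2 * s * x)))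
    (L : ℝ → ℝ)
    (hL : L = fun r => u r / d + ci * s * Real.exp (s * r) / (C + Real.exp (2 * s * r))) :
    (∀ r ∈ Set.Icc (0:ℝ) 1,
      HasDerivWithinAt L (-(u r) * L r + μ) (Set.Icc 0 1) r) ∧
    (∫ r in (0:ℝ)..1, L r = Di) ∧
    ∀ M : ℝ → ℝ, ContDiffOn ℝ 1 M (Set.Icc 0 1) →
      (∀ r ∈ Set.Icc (0:ℝ) 1,
        HasDerivWithinAt M (-(u r) * M r + μ) (Set.Icc 0 1) r) →
      (∫ r in (0:ℝ)..1, M r = Di) →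
      Set.EqOn M L (Set.Icc 0 1) := by
  have hd2 : (2:ℝ) ≤ (d:ℝ) := by exact_mod_cast hd
  have hdpos : (0:ℝ) < (d:ℝ) := by linarith
  have hd0 : (d:ℝ) ≠ 0 := ne_of_gt hdpos
  have hs0 : 0 < s := by
    rw [hs]; exact Real.sqrt_pos.mpr (by positivity)
  have hsne : s ≠ 0 := ne_of_gt hs0
  have hs2 : s ^ 2 = d * μ := by
    rw [hs, sq]; exact Real.mul_self_sqrt (by positivity)
  have hμs : μ = s ^ 2 / d := by rw [hs2]; field_simp
  have hDs : D + s ≠ 0 := by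
    intro h; apply hne; rw [← hs]; linarith
  set t : ℝ := Real.exp (D + s) - 1 with ht_def
  have ht : t ≠ 0 := by
    rw [ht_def, sub_ne_zero]
    intro h
    exact hDs (by simpa using Real.exp_eq_exp.mp (by simpa using h))
  -- positivity of numerator of denominators
  have hN : ∀ r ∈ Icc (0:ℝ) 1,
      0 < Real.exp (2*s) - Real.exp (D+s) + t * Real.exp (2*s*r) := by
    intro r hr
    have h1 : 1 ≤ Real.exp (2*s*r) := by
      rw [show (1:ℝ) = Real.exp 0 from (Real.exp_zero).symm]
      exact Real.exp_le_exp.mpr (by nlinarith [hr.1])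
    have h2 : Real.exp (2*s*r) ≤ Real.exp (2*s) := Real.exp_le_exp.mpr (by nlinarith [hr.2])
    have h3 : (1:ℝ) < Real.exp (2*s) := by
      rw [show (1:ℝ) = Real.exp 0 from (Real.exp_zero).symm]
      exact Real.exp_lt_exp.mpr (by nlinarith)
    have h4 : 0 < Real.exp (D+s) := Real.exp_pos _
    rw [ht_def]
    rcases lt_or_eq_of_le h1 with h | h
    · nlinarith [mul_pos h4 (show (0:ℝ) < Real.exp (2*s*r) - 1 by linarith)]
    · nlinarith
  have hPden : ∀ r : ℝ, C + Real.exp (2*s*r)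
      = (Real.exp (2*s) - Real.exp (D+s) + t * Real.exp (2*s*r)) / t := by
    intro r; rw [hC]; field_simp [ht]
  have hPne : ∀ r ∈ Icc (0:ℝ) 1, C + Real.exp (2*s*r) ≠ 0 := by
    intro r hr; rw [hPden r]; exact div_ne_zero (ne_of_gt (hN r hr)) ht
  -- derivatives of exponentials
  have hE : ∀ r : ℝ, HasDerivAt (fun x : ℝ => Real.exp (2*s*x)) (Real.exp (2*s*r) * (2*s)) r := by
    intro r
    have h : HasDerivAt (fun x : ℝ => 2*s*x) (2*s) r := by
      simpa using (hasDerivAt_id r).const_mul (2*s)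
    exact h.exp
  have hF : ∀ r : ℝ, HasDerivAt (fun x : ℝ => Real.exp (s*x)) (Real.exp (s*r) * s) r := by
    intro r
    have h : HasDerivAt (fun x : ℝ => s*x) s r := by
      simpa using (hasDerivAt_id r).const_mul s
    exact h.exp
  -- the main derivative computation
  have hderiv : ∀ r ∈ Icc (0:ℝ) 1, HasDerivAt L (-(u r) * L r + μ) r := by
    intro r hr
    have hP := hPne r hr
    have hP' : Real.exp (2*s*r) + C ≠ 0 := by rw [add_comm]; exact hP
    have h1 : HasDerivAt (fun x => s * (Real.exp (2*s*x) - C) / (Real.exp (2*s*x) + C))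
        ((s * (Real.exp (2*s*r) * (2*s)) * (Real.exp (2*s*r) + C)
          - s * (Real.exp (2*s*r) - C) * (Real.exp (2*s*r) * (2*s)))
          / (Real.exp (2*s*r) + C)^2) r :=
      (((hE r).sub_const C).const_mul s).div ((hE r).add_const C) hP'
    have h2 : HasDerivAt (fun x => ci * s * Real.exp (s*x) / (C + Real.exp (2*s*x)))
        ((ci * s * (Real.exp (s*r) * s) * (C + Real.exp (2*s*r))
          - ci * s * Real.exp (s*r) * (Real.exp (2*s*r) * (2*s)))
          / (C + Real.exp (2*s*r))^2) r :=
      (((hF r).const_mul (ci * s)).div ((hE r).const_add C) hP)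
    have h3 := (h1.div_const (d:ℝ)).add h2
    simp only [hL, hu]
    refine h3.congr_deriv ?_
    rw [hμs]
    rw [add_comm C (Real.exp (2*s*r))]
    generalize Real.exp (2*s*r) = E at hP' ⊢
    generalize Real.exp (s*r) = F
    field_simp
    ring
  have huIcc : uIcc (0:ℝ) 1 = Icc 0 1 := uIcc_of_le zero_le_one
  -- continuity facts
  have hcE : Continuous fun r : ℝ => Real.exp (2*s*r) := by fun_prop
  have hcF : Continuous fun r : ℝ => Real.exp (s*r) := by fun_prop
  have hcont_u : ContinuousOn u (Icc 0 1) := by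
    rw [hu]
    exact ContinuousOn.div (continuous_const.mul (hcE.sub continuous_const)).continuousOn
      ((hcE.add continuous_const)).continuousOn
      (fun r hr => by rw [add_comm]; exact hPne r hr)
  have hcont_h : ContinuousOn (fun x => s * Real.exp (s*x) / (C + Real.exp (2*s*x))) (Icc 0 1) :=
    ContinuousOn.div (continuous_const.mul hcF).continuousOn
      (continuous_const.add hcE).continuousOn (fun r hr => hPne r hr)
  have hint_u : IntervalIntegrable u MeasureTheory.volume 0 1 :=
    (huIcc ▸ hcont_u).intervalIntegrable
  have hint_h : IntervalIntegrable (fun x => s * Real.exp (s*x) / (C + Real.exp (2*s*x)))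
      MeasureTheory.volume 0 1 := (huIcc ▸ hcont_h).intervalIntegrable
  -- integral of u
  have hG : ∀ r ∈ uIcc (0:ℝ) 1,
      HasDerivAt (fun x => Real.log (C + Real.exp (2*s*x)) - s*x) (u r) r := by
    intro r hr
    rw [huIcc] at hr
    have hP := hPne r hr
    have hP' : Real.exp (2*s*r) + C ≠ 0 := by rw [add_comm]; exact hP
    have h1 : HasDerivAt (fun x => Real.log (C + Real.exp (2*s*x)))
        ((Real.exp (2*s*r) * (2*s)) / (C + Real.exp (2*s*r))) r := ((hE r).const_add C).log hP
    have h2 : HasDerivAt (fun x : ℝ => s * x) s r := by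
      simpa using (hasDerivAt_id r).const_mul s
    have h3 := h1.sub h2
    refine h3.congr_deriv ?_
    simp only [hu]
    field_simp
    ring
  have hIu : ∫ r in (0:ℝ)..1, u r = D := by
    rw [intervalIntegral.integral_eq_sub_of_hasDerivAt hG hint_u]
    have hC1 : C + 1 ≠ 0 := by
      have := hPne 0 (by norm_num)
      simpa using this
    have ht' : Real.exp (D+s) - 1 ≠ 0 := ht
    have hkey : C + Real.exp (2*s) = Real.exp (D+s) * (C + 1) := by
      rw [hC, ht_def]
      field_simp
      ring
    simp only [mul_one, mul_zero, Real.exp_zero]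
    rw [hkey, Real.log_mul (Real.exp_ne_zero _) hC1, Real.log_exp]
    ring
  -- the denominator integral
  set I : ℝ := ∫ x in (0:ℝ)..1, s * Real.exp (s * x) / (C + Real.exp (2 * s * x)) with hI_def
  have hI0 : I ≠ 0 := by
    rcases lt_or_gt_of_ne ht with htneg | htpos
    · have hneg : 0 < -I := by
        rw [hI_def, ← intervalIntegral.integral_neg]
        apply intervalIntegral.intervalIntegral_pos_of_pos_on hint_h.neg _ zero_lt_one
        intro x hx
        have hx' : x ∈ Icc (0:ℝ) 1 := Ioo_subset_Icc_self hx
        have hNx := hN x hx'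
        have he : 0 < Real.exp (s*x) := Real.exp_pos _
        simp only [Pi.neg_apply]
        rw [hPden x]
        have heq : s * Real.exp (s*x) / ((Real.exp (2*s) - Real.exp (D+s) + t * Real.exp (2*s*x)) / t)
            = s * Real.exp (s*x) * t / (Real.exp (2*s) - Real.exp (D+s) + t * Real.exp (2*s*x)) := by
          rw [div_div_eq_mul_div]
        rw [heq]
        have hnum : s * Real.exp (s*x) * t < 0 :=
          mul_neg_of_pos_of_neg (mul_pos hs0 he) htneg
        exact neg_pos.mpr (div_neg_of_neg_of_pos hnum hNx)
      intro h; rw [h] at hneg; simp at hneg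
    · have hpos : 0 < I := by
        rw [hI_def]
        apply intervalIntegral.intervalIntegral_pos_of_pos_on hint_h _ zero_lt_one
        intro x hx
        have hx' : x ∈ Icc (0:ℝ) 1 := Ioo_subset_Icc_self hx
        have hNx := hN x hx'
        rw [hPden x]
        have he : 0 < Real.exp (s*x) := Real.exp_pos _
        have : s * Real.exp (s*x) / ((Real.exp (2*s) - Real.exp (D+s) + t * Real.exp (2*s*x)) / t)
            = s * Real.exp (s*x) * t / (Real.exp (2*s) - Real.exp (D+s) + t * Real.exp (2*s*x)) := by
          rw [div_div_eq_mul_div]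
        rw [this]
        exact div_pos (mul_pos (mul_pos hs0 he) htpos) hNx
      exact ne_of_gt hpos
  have hciI : ci * I = Di - D / d := by
    rw [hci]; field_simp
  -- integral of L
  have hfun : (fun x => ci * s * Real.exp (s*x) / (C + Real.exp (2*s*x)))
      = fun x => ci * (s * Real.exp (s*x) / (C + Real.exp (2*s*x))) := by
    funext x; ring
  have hint_u' : IntervalIntegrable (fun r => u r / (d:ℝ)) MeasureTheory.volume 0 1 :=
    hint_u.div_const _
  have hint_h' : IntervalIntegrable (fun x => ci * s * Real.exp (s*x) / (C + Real.exp (2*s*x)))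
      MeasureTheory.volume 0 1 := by
    rw [hfun]; exact hint_h.const_mul ci
  have hIL : ∫ r in (0:ℝ)..1, L r = Di := by
    simp only [hL]
    rw [intervalIntegral.integral_add hint_u' hint_h', hfun,
      intervalIntegral.integral_const_mul, intervalIntegral.integral_div, hIu, ← hI_def, hciI]
    ring
  refine ⟨fun r hr => (hderiv r hr).hasDerivWithinAt, hIL, ?_⟩
  -- uniqueness
  intro M hM1 hM2 hM3
  set W : ℝ → ℝ := fun r => Real.exp (s*r) + C * Real.exp (-(s*r)) with hW_def
  have hexp2 : ∀ r : ℝ, Real.exp (2*s*r) = Real.exp (s*r) * Real.exp (s*r) := by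
    intro r; rw [← Real.exp_add]; ring_nf
  have hWval : ∀ r : ℝ, W r * Real.exp (s*r) = C + Real.exp (2*s*r) := by
    intro r
    simp only [hW_def]
    rw [hexp2 r, Real.exp_neg]
    field_simp
    ring
  have hWne : ∀ r ∈ Icc (0:ℝ) 1, W r ≠ 0 := by
    intro r hr h0
    apply hPne r hr
    rw [← hWval r, h0, zero_mul]
  have hWd : ∀ r : ℝ, HasDerivAt W (s * Real.exp (s*r) - s * C * Real.exp (-(s*r))) r := by
    intro r
    have h2 : HasDerivAt (fun x : ℝ => Real.exp (-(s*x))) (Real.exp (-(s*r)) * (-s)) r := by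
      have h : HasDerivAt (fun x : ℝ => -(s*x)) (-s) r := by
        simpa using (hasDerivAt_id r).const_mul (-s)
      exact h.exp
    have h3 := (hF r).add (h2.const_mul C)
    refine h3.congr_deriv ?_
    ring
  have hMLd : ∀ r ∈ Icc (0:ℝ) 1,
      HasDerivWithinAt (fun x => W x * (M x - L x)) 0 (Icc 0 1) r := by
    intro r hr
    have h1 := (hWd r).hasDerivWithinAt.mul ((hM2 r hr).sub (hderiv r hr).hasDerivWithinAt)
    refine h1.congr_deriv ?_
    have hP := hPne r hr
    have hP' : Real.exp (2*s*r) + C ≠ 0 := by rw [add_comm]; exact hP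
    have hWu : u r * W r = s * Real.exp (s*r) - s * C * Real.exp (-(s*r)) := by
      have hP'' : Real.exp (s*r) ^ 2 + C ≠ 0 := by rw [sq, ← hexp2 r]; exact hP'
      simp only [hu, hW_def]
      rw [Real.exp_neg, hexp2 r]
      field_simp [hP'']
    rw [Pi.sub_apply]
    linear_combination -(M r - L r) * hWu
  have hcontL : ContinuousOn L (Icc 0 1) := fun r hr =>
    (hderiv r hr).continuousAt.continuousWithinAt
  have hcontM : ContinuousOn M (Icc 0 1) := hM1.continuousOn
  have hcontW : Continuous W := by
    rw [hW_def]; fun_prop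
  have hgcont : ContinuousOn (fun x => W x * (M x - L x)) (Icc 0 1) :=
    hcontW.continuousOn.mul (hcontM.sub hcontL)
  have hconst : ∀ x ∈ Icc (0:ℝ) 1, W x * (M x - L x) = W 0 * (M 0 - L 0) := by
    apply constant_of_has_deriv_right_zero hgcont
    intro y hy
    exact (hMLd y (Ico_subset_Icc_self hy)).mono_of_mem_nhdsWithin (Icc_mem_nhdsGE_of_mem hy)
  set K : ℝ := W 0 * (M 0 - L 0) with hK_def
  clear_value K
  have hML : ∀ x ∈ Icc (0:ℝ) 1, M x - L x = K / W x := by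
    intro x hx
    rw [eq_div_iff (hWne x hx), mul_comm]
    exact hconst x hx
  have hintM : IntervalIntegrable M MeasureTheory.volume 0 1 :=
    (huIcc ▸ hcontM).intervalIntegrable
  have hintL : IntervalIntegrable L MeasureTheory.volume 0 1 :=
    (huIcc ▸ hcontL).intervalIntegrable
  have h0int : ∫ x in (0:ℝ)..1, (M x - L x) = 0 := by
    rw [intervalIntegral.integral_sub hintM hintL, hM3, hIL]; ring
  have hcongr : ∫ x in (0:ℝ)..1, (M x - L x)
      = ∫ x in (0:ℝ)..1, (K/s) * (s * Real.exp (s*x) / (C + Real.exp (2*s*x))) := by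
    apply intervalIntegral.integral_congr
    intro x hx
    rw [huIcc] at hx
    show M x - L x = K / s * (s * Real.exp (s*x) / (C + Real.exp (2*s*x)))
    have h1 := hWval x
    have hPx := hPne x hx
    have hWx := hWne x hx
    rw [hML x hx, ← h1]
    field_simp
  have hKI : K / s * I = 0 := by
    rw [← h0int, hcongr, intervalIntegral.integral_const_mul, ← hI_def]
  have hK0 : K = 0 := by
    rcases mul_eq_zero.mp hKI with h | h
    · rcases div_eq_zero_iff.mp h with h' | h'
      · exact h'
      · exact absurd h' hsne
    · exact absurd h hI0
  intro x hx
  have h := hML x hx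
  rw [hK0, zero_div] at h
  exact sub_eq_zero.mp h
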